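/- Let n ≥ 3 and let ω be a weight function on the edges of K_n satisfying the triangle condition. Let C be a cycle of K_n and let e = {u, v} be an edge of C. Then ω(e) ≥ ω(f) for every edge f of C if and only if for every vertex w of C with w ≠ u and w ≠ v, the weight ω({u,v}) is a maximum of the triangle on u, v, w, i.e., ω({u,v}) ≥ ω({u,w}) and ω({u,v}) ≥ ω({v,w}). -/

import Mathlib

/-- Two of the three reals `a, b, c` are equal and not less than the third; equivalently,
the maximum of the three is attained at least twice. -/
def TwoMax (a b c : ℝ) : Prop :=
  (a = b ∧ c ≤ a) ∨ (a = c ∧ b ≤ a) ∨ (b = c ∧ a ≤ b)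

/-- The triangle condition for a weight function `ω` on the edges of the complete graph
on `Fin n`: in every triangle, two of the three edge weights are equal and not less
than the third. -/
def TriangleCondition (n : ℕ) (ω : Sym2 (Fin n) → ℝ) : Prop :=
  ∀ u v w : Fin n, u ≠ v → v ≠ w → u ≠ w →
    TwoMax (ω s(u, v)) (ω s(v, w)) (ω s(u, w))

/-- The cycle condition for a weight function `ω` on the edges of the complete graph on
`Fin n`: in every cycle, the maximum edge weight is attained by at least two edges of
the cycle. -/
def CycleCondition (n : ℕ) (ω : Sym2 (Fin n) → ℝ) : Prop :=
  ∀ (x : Fin n) (C : SimpleGraph.Walk (⊤ : SimpleGraph (Fin n)) x x), C.IsCycle →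
    ∃ e ∈ C.edges, ∃ f ∈ C.edges, e ≠ f ∧ ω e = ω f ∧ ∀ g ∈ C.edges, ω g ≤ ω e

/-- The ω-weight of a graph `T` on `Fin n`: the sum of `ω` over the edges of `T`. -/
noncomputable def graphWeight (n : ℕ) (ω : Sym2 (Fin n) → ℝ)
    (T : SimpleGraph (Fin n)) : ℝ :=
  ∑ᶠ e ∈ T.edgeSet, ω e

/-- `T` is an ω-minimum spanning tree of the complete graph on `Fin n`: it is a tree on
the vertex set `Fin n` and no such tree has strictly smaller ω-weight. -/
def IsMinSpanningTree (n : ℕ) (ω : Sym2 (Fin n) → ℝ) (T : SimpleGraph (Fin n)) : Prop :=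
  T.IsTree ∧ ∀ T' : SimpleGraph (Fin n), T'.IsTree →
    graphWeight n ω T ≤ graphWeight n ω T'

private lemma ultra_aux {n : ℕ} {ω : Sym2 (Fin n) → ℝ} (htri : TriangleCondition n ω)
    {a b c : Fin n} (hab : a ≠ b) (hbc : b ≠ c) (hac : a ≠ c) :
    ω s(a, c) ≤ max (ω s(a, b)) (ω s(b, c)) := by
  rcases htri a b c hab hbc hac with ⟨h1, h2⟩ | ⟨h1, h2⟩ | ⟨h1, h2⟩ <;>
    simp only [le_max_iff] <;> [left; left; right] <;> linarith

private lemma walk_bound_aux {n : ℕ} {ω : Sym2 (Fin n) → ℝ} (htri : TriangleCondition n ω)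
    {a b : Fin n} (p : SimpleGraph.Walk (⊤ : SimpleGraph (Fin n)) a b) (hab : a ≠ b) :
    ∃ e ∈ p.edges, ω s(a, b) ≤ ω e := by
  induction p with
  | nil => exact absurd rfl hab
  | @cons a c b h q ih =>
    have hac : a ≠ c := h.ne
    by_cases hcb : c = b
    · subst hcb
      exact ⟨s(a, c), by simp, le_refl _⟩
    · obtain ⟨e, heq, hle⟩ := ih hcb
      rcases le_max_iff.mp (ultra_aux htri hac hcb hab) with h' | h'
      · exact ⟨s(a, c), by simp, h'⟩
      · exact ⟨e, by simp [heq], h'.trans hle⟩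

/-- Let `ω` be a weight function on the edges of the complete graph `K_n` (`n ≥ 3`)
satisfying the triangle condition, let `C` be a cycle of `K_n`, and let `{u, v}` be an
edge of `C`.  Then `{u, v}` has maximum weight among the edges of `C` if and only if
for every vertex `w` of `C` other than `u` and `v`, the weight `ω {u, v}` is a maximum
of the triangle on `u, v, w`. -/
theorem maxEdge_cycle_iff_maxEdge_triangles (n : ℕ) (hn : 3 ≤ n)
    (ω : Sym2 (Fin n) → ℝ) (htri : TriangleCondition n ω)
    (x : Fin n) (C : SimpleGraph.Walk (⊤ : SimpleGraph (Fin n)) x x) (hC : C.IsCycle)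
    (u v : Fin n) (huv : u ≠ v) (he : s(u, v) ∈ C.edges) :
    (∀ f ∈ C.edges, ω f ≤ ω s(u, v)) ↔
      (∀ w ∈ C.support, w ≠ u → w ≠ v →
        ω s(u, w) ≤ ω s(u, v) ∧ ω s(v, w) ≤ ω s(u, v)) := by
  constructor
  · intro hmax w hw hwu hwv
    have key : ∀ z : Fin n, z ∈ C.support → z ≠ w → ω s(z, w) ≤ ω s(u, v) := by
      intro z hz hzw
      have hwt : w ∈ C.support.tail := by
        cases C with
        | nil => exact absurd rfl hC.ne_nil
        | cons h q =>
          simp only [SimpleGraph.Walk.support_cons, List.tail_cons]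
          rcases List.mem_cons.mp (by simpa using hw) with h' | h'
          · subst h'; exact q.end_mem_support
          · exact h'
      have hw' : w ∈ (C.rotate z hz).support :=
        List.mem_of_mem_tail ((C.support_rotate z hz).mem_iff.mpr hwt)
      obtain ⟨e, hep, hle⟩ := walk_bound_aux htri ((C.rotate z hz).takeUntil w hw') hzw
      have he' : e ∈ C.edges :=
        (C.rotate_edges z hz).mem_iff.mp ((C.rotate z hz).edges_takeUntil_subset hw' hep)
      exact hle.trans (hmax e he')
    have hu : u ∈ C.support := C.fst_mem_support_of_mem_edges he
    have hv : v ∈ C.support := C.snd_mem_support_of_mem_edges he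
    exact ⟨key u hu (Ne.symm hwu), key v hv (Ne.symm hwv)⟩
  · intro htris f hf
    revert hf
    induction f using Sym2.ind with
    | _ a b =>
    intro hf
    have hab : a ≠ b := (C.adj_of_mem_edges hf).ne
    have ha : a ∈ C.support := C.fst_mem_support_of_mem_edges hf
    have hb : b ∈ C.support := C.snd_mem_support_of_mem_edges hf
    by_cases hau : a = u
    · subst hau
      by_cases hbv : b = v
      · subst hbv; exact le_refl _
      · exact (htris b hb (Ne.symm hab) hbv).1
    · by_cases hav : a = v
      · subst hav
        by_cases hbu : b = u
        · subst hbu; rw [Sym2.eq_swap]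
        · exact (htris b hb hbu (Ne.symm hab)).2
      · by_cases hbu : b = u
        · subst hbu
          have : s(a, b) = s(b, a) := Sym2.eq_swap
          rw [this]
          exact (htris a ha hau hav).1
        · by_cases hbv : b = v
          · subst hbv
            have : s(a, b) = s(b, a) := Sym2.eq_swap
            rw [this]
            exact (htris a ha hau hav).2
          · have h1 := (htris a ha hau hav).1
            have h2 := (htris b hb hbu hbv).1
            have h3 := ultra_aux htri hau (Ne.symm hbu) hab
            have h4 : ω s(a, u) = ω s(u, a) := by rw [Sym2.eq_swap]
            rcases le_max_iff.mp h3 with h' | h' <;> linarith
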